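/- Let a > 0 be a real number and n ≥ 1, and let φ_n be a monic OPUC of degree n for the weight w(θ) := |1 − e^{iθ}|^{2a} on [0, 2π]. Then φ_n satisfies the polynomial second-order differential equation X(X − 1)·φ_n''(X) + ((1 − n − a)(X − 1) + (2a + 1)X)·φ_n'(X) − n(a + 1)·φ_n(X) = 0 identically in ℂ[X]. -/

import Mathlib

open Polynomial Complex

/-- `φ` is a monic orthogonal polynomial on the unit circle of degree `n`
for the weight `w` on `[0, 2π]`. -/
def IsMonicOPUC (w : ℝ → ℝ) (n : ℕ) (φ : Polynomial ℂ) : Prop :=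
  φ.Monic ∧ φ.degree = (n : ℕ) ∧
    ∀ k < n, (∫ θ in (0:ℝ)..(2 * Real.pi),
      φ.eval (Complex.exp (θ * Complex.I)) *
        Complex.exp (-(k : ℂ) * θ * Complex.I) * (w θ : ℂ)) = 0

open Polynomial Complex MeasureTheory intervalIntegral Set

noncomputable section
namespace OpucAux

abbrev e (θ : ℝ) : ℂ := Complex.exp (θ * Complex.I)
abbrev Ek (k : ℕ) (θ : ℝ) : ℂ := Complex.exp (-(k : ℂ) * θ * Complex.I)
abbrev wC (a : ℝ) (θ : ℝ) : ℂ := ((2 - 2 * Real.cos θ) ^ a : ℝ)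

def spoly (a : ℝ) (k : ℕ) (p : Polynomial ℂ) : Polynomial ℂ :=
  (X ^ 2 - X) * derivative p + (C ((a : ℂ) + 1 - (k : ℂ)) * X + C ((a : ℂ) + (k : ℂ))) * p

lemma hasDerivAt_e (θ : ℝ) : HasDerivAt e (e θ * Complex.I) θ := by
  have h : HasDerivAt (fun θ : ℝ => (θ : ℂ) * Complex.I) Complex.I θ := by
    simpa using (Complex.ofRealCLM.hasDerivAt (x := θ)).mul_const Complex.I
  simpa using h.cexp

lemma hasDerivAt_ek (k : ℕ) (θ : ℝ) :
    HasDerivAt (Ek k) (Ek k θ * (-(k : ℂ) * Complex.I)) θ := by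
  have h : HasDerivAt (fun θ : ℝ => -(k : ℂ) * θ * Complex.I) (-(k : ℂ) * Complex.I) θ := by
    have := ((Complex.ofRealCLM.hasDerivAt (x := θ)).const_mul (-(k:ℂ))).mul_const Complex.I
    simpa only [mul_one, Complex.ofRealCLM_apply, Complex.ofReal_one] using this
  exact h.cexp

lemma hasDerivAt_evalp (p : Polynomial ℂ) (θ : ℝ) :
    HasDerivAt (fun θ : ℝ => p.eval (e θ))
      (e θ * Complex.I * p.derivative.eval (e θ)) θ := by
  have hp : HasDerivAt (fun z : ℂ => p.eval z) (p.derivative.eval (e θ)) (e θ) :=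
    p.hasDerivAt (e θ)
  have := HasDerivAt.scomp (𝕜 := ℝ) (𝕜' := ℂ) θ hp (hasDerivAt_e θ)
  exact this

variable {a : ℝ}

lemma base_pos {θ : ℝ} (h : θ ∈ Ioo (0:ℝ) (2*Real.pi)) : 0 < 2 - 2 * Real.cos θ := by
  have h1 : Real.cos θ ≠ 1 := by
    intro hc
    have := (Real.cos_eq_one_iff_of_lt_of_lt (x := θ) (by nlinarith [Real.pi_pos, h.1, h.2]) h.2).1 hc
    exact absurd this (ne_of_gt h.1)
  have h2 : Real.cos θ ≤ 1 := Real.cos_le_one θ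
  cases lt_or_eq_of_le h2 with
  | inl h3 => linarith
  | inr h3 => exact absurd h3 h1

lemma w_cont (ha : 0 < a) : Continuous (fun θ : ℝ => (2 - 2 * Real.cos θ) ^ a) := by
  have hb : Continuous fun θ : ℝ => 2 - 2 * Real.cos θ := by continuity
  refine continuous_iff_continuousAt.2 fun θ => ?_
  exact (hb.continuousAt).rpow_const (Or.inr ha.le)

lemma w_deriv {θ : ℝ} (h : θ ∈ Ioo (0:ℝ) (2*Real.pi)) :
    HasDerivAt (fun θ : ℝ => (2 - 2 * Real.cos θ) ^ a)
      (a * (2 - 2 * Real.cos θ) ^ (a - 1) * (2 * Real.sin θ)) θ := by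
  have hb : HasDerivAt (fun θ : ℝ => 2 - 2 * Real.cos θ) (2 * Real.sin θ) θ := by
    simpa using ((Real.hasDerivAt_cos θ).const_mul 2).const_sub 2
  have := hb.rpow_const (p := a) (Or.inl (ne_of_gt (base_pos h)))
  simpa [mul_assoc, mul_comm, mul_left_comm] using this

lemma key_id (θ : ℝ) :
    (e θ - 1) * ((2 * Real.sin θ : ℝ) : ℂ)
      = Complex.I * (e θ + 1) * ((2 - 2 * Real.cos θ : ℝ) : ℂ) := by
  have hsc := Complex.sin_sq_add_cos_sq (θ : ℂ)
  have hI := Complex.I_sq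
  have he : e θ = Complex.cos θ + Complex.sin θ * Complex.I := by
    rw [show e θ = Complex.exp ((θ:ℂ) * Complex.I) from rfl, Complex.exp_mul_I]
  rw [he]
  push_cast
  linear_combination 2 * Complex.I * hsc +
    (2 * Complex.cos θ * Complex.sin θ - 2 * Complex.sin θ) * hI

lemma key_id' (ha : 0 < a) {θ : ℝ} (h : θ ∈ Ioo (0:ℝ) (2*Real.pi)) :
    (e θ - 1) * ((a * (2 - 2 * Real.cos θ) ^ (a - 1) * (2 * Real.sin θ) : ℝ) : ℂ)
      = Complex.I * (a : ℂ) * (e θ + 1) * wC a θ := by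
  have hb := base_pos h
  have hba : (2 - 2*Real.cos θ) ^ (a-1) * (2 - 2*Real.cos θ) = (2 - 2*Real.cos θ) ^ a := by
    rw [← Real.rpow_add_one (ne_of_gt hb)]
    norm_num
  have hkey := key_id θ
  rw [show wC a θ = (((2 - 2*Real.cos θ) ^ a : ℝ) : ℂ) from rfl, ← hba]
  simp only [Complex.ofReal_mul, Complex.ofReal_sub, Complex.ofReal_ofNat] at hkey ⊢
  linear_combination ((a : ℂ) * (((2 - 2*Real.cos θ) ^ (a-1) : ℝ) : ℂ)) * hkey

lemma G_hasDerivAt (ha : 0 < a) (p : Polynomial ℂ) (k : ℕ) {θ : ℝ}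
    (h : θ ∈ Ioo (0:ℝ) (2*Real.pi)) :
    HasDerivAt (fun θ => p.eval (e θ) * Ek k θ * (e θ - 1) * wC a θ)
      (Complex.I * ((spoly a k p).eval (e θ) * Ek k θ * wC a θ)) θ := by
  have h1 := hasDerivAt_evalp p θ
  have h2 := hasDerivAt_ek k θ
  have h3 : HasDerivAt (fun θ : ℝ => e θ - 1) (e θ * Complex.I) θ :=
    (hasDerivAt_e θ).sub_const 1
  have h4r := w_deriv (a := a) h
  have h4 : HasDerivAt (fun θ : ℝ => wC a θ)
      ((a * (2 - 2 * Real.cos θ) ^ (a - 1) * (2 * Real.sin θ) : ℝ) : ℂ) θ :=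
    h4r.ofReal_comp
  have hD := ((h1.mul h2).mul h3).mul h4
  convert hD using 1
  · rfl
  · rfl
  have hk := key_id' ha h
  simp only [spoly, eval_add, eval_mul, eval_sub, eval_pow, eval_X, eval_C, Pi.mul_apply]
  linear_combination (-(p.eval (e θ) * Ek k θ)) * hk


variable {a : ℝ}


lemma cont_e : Continuous e := by
  exact Complex.continuous_exp.comp (by continuity)

lemma cont_Ek (k : ℕ) : Continuous (Ek k) := by
  exact Complex.continuous_exp.comp (by continuity)

lemma cont_integrand (ha : 0 < a) (q : Polynomial ℂ) (k : ℕ) :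
    Continuous (fun θ : ℝ => q.eval (e θ) * Ek k θ * wC a θ) := by
  exact ((q.continuous_aeval.comp cont_e).mul (cont_Ek k)).mul
    (Complex.continuous_ofReal.comp (w_cont ha))

def Mint (a : ℝ) (q : Polynomial ℂ) (k : ℕ) : ℂ :=
  ∫ θ in (0:ℝ)..(2 * Real.pi), q.eval (e θ) * Ek k θ * wC a θ

lemma Mint_add (ha : 0 < a) (q r : Polynomial ℂ) (k : ℕ) :
    Mint a (q + r) k = Mint a q k + Mint a r k := by
  unfold Mint
  rw [← intervalIntegral.integral_add ((cont_integrand ha q k).intervalIntegrable _ _)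
    ((cont_integrand ha r k).intervalIntegrable _ _)]
  congr 1
  funext θ
  simp only [eval_add]
  ring

lemma Mint_Cmul (c : ℂ) (q : Polynomial ℂ) (k : ℕ) :
    Mint a (C c * q) k = c * Mint a q k := by
  unfold Mint
  rw [← intervalIntegral.integral_const_mul]
  congr 1
  funext θ
  simp only [eval_mul, eval_C]
  ring

lemma Mint_Xmul (q : Polynomial ℂ) (k : ℕ) :
    Mint a (X * q) (k + 1) = Mint a q k := by
  unfold Mint
  congr 1
  funext θ
  simp only [eval_mul, eval_X]
  have he : e θ * Ek (k+1) θ = Ek k θ := by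
    rw [show e θ * Ek (k+1) θ = Complex.exp ((θ:ℂ) * Complex.I) *
      Complex.exp (-((k+1:ℕ) : ℂ) * θ * Complex.I) from rfl, ← Complex.exp_add]
    congr 1
    push_cast
    ring
  calc e θ * q.eval (e θ) * Ek (k+1) θ * wC a θ
      = q.eval (e θ) * (e θ * Ek (k+1) θ) * wC a θ := by ring
    _ = q.eval (e θ) * Ek k θ * wC a θ := by rw [he]



lemma star (ha : 0 < a) (p : Polynomial ℂ) (k : ℕ) :
    Mint a (spoly a k p) k = 0 := by
  have h2pi : (0:ℝ) ≤ 2 * Real.pi := by positivity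
  have hGc : Continuous (fun θ => p.eval (e θ) * Ek k θ * (e θ - 1) * wC a θ) := by
    exact (((p.continuous_aeval.comp cont_e).mul (cont_Ek k)).mul
      (cont_e.sub continuous_const)).mul (Complex.continuous_ofReal.comp (w_cont ha))
  have hgc : Continuous (fun θ : ℝ => Complex.I * ((spoly a k p).eval (e θ) * Ek k θ * wC a θ)) :=
    continuous_const.mul (cont_integrand ha (spoly a k p) k)
  have hftc := integral_eq_sub_of_hasDeriv_right_of_le h2pi hGc.continuousOn
    (fun x hx => (G_hasDerivAt ha p k hx).hasDerivWithinAt)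
    ((hgc).intervalIntegrable _ _)
  have hw0 : wC a 0 = 0 := by
    simp [Real.cos_zero, Real.zero_rpow (ne_of_gt ha)]
  have hw2 : wC a (2 * Real.pi) = 0 := by
    simp [Real.cos_two_pi, Real.zero_rpow (ne_of_gt ha)]
  rw [hw0, hw2, mul_zero, mul_zero, sub_zero, intervalIntegral.integral_const_mul] at hftc
  have := mul_eq_zero.1 hftc
  rcases this with h | h
  · exact absurd h Complex.I_ne_zero
  · exact h



lemma Mint_target (ha : 0 < a) (n : ℕ) (φ : Polynomial ℂ)
    (horth : ∀ j < n, Mint a φ j = 0) {k : ℕ} (hk : k < n) :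
    Mint a (X * (X - 1) * derivative (derivative φ) +
      (C ((1:ℂ) - (n:ℂ) - (a:ℂ)) * (X - 1) + C (2*(a:ℂ)+1) * X) * derivative φ -
      C ((n:ℂ) * ((a:ℂ)+1)) * φ) k = 0 := by
  have hid1 : X * (X - 1) * derivative (derivative φ) +
      (C ((1:ℂ) - (n:ℂ) - (a:ℂ)) * (X - 1) + C (2*(a:ℂ)+1) * X) * derivative φ -
      C ((n:ℂ) * ((a:ℂ)+1)) * φ
      = spoly a k (derivative φ) + (C ((k:ℂ)+1-(n:ℂ)) * ((X-1) * derivative φ) +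
        C (-((n:ℂ)*((a:ℂ)+1))) * φ) := by
    simp only [spoly, map_add, map_sub, map_mul, map_one, map_neg, map_natCast, map_ofNat]
    ring
  have hA : Mint a ((X-1) * derivative φ) k
      = -(((a:ℂ)-(k:ℂ)) * Mint a φ k) - ((a:ℂ)+(k:ℂ)+1) * Mint a φ (k+1) := by
    have hx : Mint a ((X-1) * derivative φ) k
        = Mint a (X * ((X-1) * derivative φ)) (k+1) := (Mint_Xmul _ _).symm
    have hid2 : X * ((X-1) * derivative φ)
        = spoly a (k+1) φ + (C (-((a:ℂ)-(k:ℂ))) * (X*φ) + C (-((a:ℂ)+(k:ℂ)+1)) * φ) := by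
      simp only [spoly, map_add, map_sub, map_mul, map_one, map_neg, map_natCast, map_ofNat]
      push_cast
      ring
    rw [hx, hid2, Mint_add ha, Mint_add ha, Mint_Cmul, Mint_Cmul, star ha, Mint_Xmul]
    ring
  rw [hid1, Mint_add ha, Mint_add ha, Mint_Cmul, Mint_Cmul, star ha, hA, horth k hk]
  have hk1 : k + 1 ≤ n := hk
  rcases lt_or_eq_of_le hk1 with h | h
  · rw [horth (k+1) h]
    ring
  · have hz : ((k:ℂ)+1-(n:ℂ)) = 0 := by
      rw [← h]
      push_cast
      ring
    rw [hz]
    ring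



lemma e_injOn : InjOn e (Ioo (0:ℝ) (2*Real.pi)) := by
  intro x hx y hy hxy
  rw [Complex.exp_eq_exp_iff_exists_int] at hxy
  obtain ⟨m, hm⟩ := hxy
  have hm2 : (x:ℂ) = (y:ℂ) + m * (2*Real.pi) := by
    have h2 : ((x:ℂ) - y - m*(2*Real.pi)) * Complex.I = 0 := by linear_combination hm
    rcases mul_eq_zero.1 h2 with h3 | h3
    · linear_combination h3
    · exact absurd h3 Complex.I_ne_zero
  have hmr : x = y + m * (2*Real.pi) := by exact_mod_cast hm2
  have hpi := Real.pi_pos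
  have h1 : (m:ℝ) < 1 := by nlinarith [hx.1, hx.2, hy.1, hy.2]
  have h2 : (-1:ℝ) < m := by nlinarith [hx.1, hx.2, hy.1, hy.2]
  have : m = 0 := by
    have h1' : m < 1 := by exact_mod_cast h1
    have h2' : (-1:ℤ) < m := by exact_mod_cast h2
    omega
  rw [this] at hmr
  simpa using hmr

lemma q_eq_zero (ha : 0 < a) {n : ℕ} (q : Polynomial ℂ) (hdeg : q.natDegree ≤ n)
    (hM : ∀ k ≤ n, (starRingEnd ℂ) (q.coeff k) * Mint a q k = 0) : q = 0 := by
  have h2pi : (0:ℝ) ≤ 2 * Real.pi := by positivity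
  -- conjugate expansion
  have hconj : ∀ θ : ℝ, (starRingEnd ℂ) (q.eval (e θ))
      = ∑ k ∈ Finset.range (n+1), (starRingEnd ℂ) (q.coeff k) * Ek k θ := by
    intro θ
    rw [Polynomial.eval_eq_sum_range' (Nat.lt_succ_of_le hdeg)]
    rw [map_sum]
    refine Finset.sum_congr rfl fun k _ => ?_
    rw [map_mul, map_pow]
    congr 1
    have hce : (starRingEnd ℂ) (e θ) = Complex.exp (-(θ:ℂ) * Complex.I) := by
      rw [show e θ = Complex.exp ((θ:ℂ) * Complex.I) from rfl, ← Complex.exp_conj]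
      rw [map_mul, Complex.conj_ofReal, Complex.conj_I]
      ring
    rw [hce, ← Complex.exp_nat_mul]
    congr 1
    push_cast
    ring
  -- the squared-norm integral
  have hJ : (∫ θ in (0:ℝ)..(2*Real.pi),
      q.eval (e θ) * (starRingEnd ℂ) (q.eval (e θ)) * wC a θ) = 0 := by
    have hrw : (fun θ : ℝ => q.eval (e θ) * (starRingEnd ℂ) (q.eval (e θ)) * wC a θ)
        = fun θ : ℝ => ∑ k ∈ Finset.range (n+1),
            (starRingEnd ℂ) (q.coeff k) * (q.eval (e θ) * Ek k θ * wC a θ) := by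
      funext θ
      rw [show q.eval (e θ) * (starRingEnd ℂ) (q.eval (e θ)) * wC a θ
          = (starRingEnd ℂ) (q.eval (e θ)) * (q.eval (e θ) * wC a θ) by ring, hconj θ,
        Finset.sum_mul]
      refine Finset.sum_congr rfl fun k _ => ?_
      ring
    rw [hrw, intervalIntegral.integral_finset_sum]
    · have : ∀ k ∈ Finset.range (n+1),
          (∫ θ in (0:ℝ)..(2*Real.pi),
            (starRingEnd ℂ) (q.coeff k) * (q.eval (e θ) * Ek k θ * wC a θ))
          = (starRingEnd ℂ) (q.coeff k) * Mint a q k := by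
        intro k _
        rw [intervalIntegral.integral_const_mul]
        rfl
      rw [Finset.sum_congr rfl this]
      refine Finset.sum_eq_zero fun k hk => ?_
      exact hM k (Nat.lt_succ_iff.1 (Finset.mem_range.1 hk))
    · intro k _
      exact (continuous_const.mul (cont_integrand ha q k)).intervalIntegrable _ _
  -- rewrite as real integral
  have hreal : (∫ θ in (0:ℝ)..(2*Real.pi),
      Complex.normSq (q.eval (e θ)) * (2 - 2*Real.cos θ) ^ a) = 0 := by
    have : (fun θ : ℝ => q.eval (e θ) * (starRingEnd ℂ) (q.eval (e θ)) * wC a θ)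
        = fun θ : ℝ => ((Complex.normSq (q.eval (e θ)) * (2 - 2*Real.cos θ) ^ a : ℝ) : ℂ) := by
      funext θ
      rw [Complex.mul_conj]
      push_cast
      ring
    rw [this, intervalIntegral.integral_ofReal] at hJ
    exact_mod_cast hJ
  set f : ℝ → ℝ := fun θ => Complex.normSq (q.eval (e θ)) * (2 - 2*Real.cos θ) ^ a with hf
  have hf_cont : Continuous f := by
    exact (Complex.continuous_normSq.comp ((q.continuous_aeval).comp cont_e)).mul (w_cont ha)
  have hf_nonneg : ∀ θ, 0 ≤ f θ := by
    intro θ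
    have h1 : (0:ℝ) ≤ 2 - 2*Real.cos θ := by nlinarith [Real.cos_le_one θ]
    exact mul_nonneg (Complex.normSq_nonneg _) (Real.rpow_nonneg h1 a)
  -- f vanishes a.e. on Ioc
  have hae : f =ᵐ[volume.restrict (Ioc (0:ℝ) (2*Real.pi))] 0 := by
    have hint : IntegrableOn f (Ioc (0:ℝ) (2*Real.pi)) := hf_cont.integrableOn_Ioc
    have := (MeasureTheory.integral_eq_zero_iff_of_nonneg
      (μ := volume.restrict (Ioc (0:ℝ) (2*Real.pi)))
      hf_nonneg hint).1 ?_
    · exact this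
    · rw [← intervalIntegral.integral_of_le h2pi]
      exact hreal
  -- f vanishes on Ioo
  have hzero : ∀ θ ∈ Ioo (0:ℝ) (2*Real.pi), f θ = 0 := by
    by_contra hcon
    push_neg at hcon
    obtain ⟨θ0, hθ0, hne⟩ := hcon
    set s : Set ℝ := {x | f x ≠ 0} ∩ Ioo (0:ℝ) (2*Real.pi) with hs
    have hs_open : IsOpen s :=
      ((isOpen_compl_iff.2 (isClosed_singleton (x := (0:ℝ)))).preimage hf_cont).inter isOpen_Ioo
    have hs_ne : s.Nonempty := ⟨θ0, hne, hθ0⟩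
    have hpos := hs_open.measure_pos volume hs_ne
    have hsub : s ⊆ {x | f x ≠ 0} ∩ Ioc (0:ℝ) (2*Real.pi) :=
      inter_subset_inter_right _ Ioo_subset_Ioc_self
    have hs_meas : MeasurableSet {x | f x ≠ 0} :=
      (((isOpen_compl_iff.2 (isClosed_singleton (x := (0:ℝ)))).preimage hf_cont)).measurableSet
    have hmeas : volume ({x | f x ≠ 0} ∩ Ioc (0:ℝ) (2*Real.pi)) = 0 := by
      have h0 : (volume.restrict (Ioc (0:ℝ) (2*Real.pi))) {x | f x ≠ 0} = 0 := by
        have h1 := hae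
        rw [Filter.EventuallyEq, MeasureTheory.ae_iff] at h1
        simpa using h1
      rw [Measure.restrict_apply hs_meas] at h0
      exact h0
    exact absurd (le_trans (measure_mono hsub) hmeas.le) (not_le.2 hpos)
  -- q has infinitely many roots
  have hroots : ∀ θ ∈ Ioo (0:ℝ) (2*Real.pi), q.IsRoot (e θ) := by
    intro θ hθ
    have hfθ := hzero θ hθ
    have hwpos : (0:ℝ) < (2 - 2*Real.cos θ) ^ a := Real.rpow_pos_of_pos (base_pos hθ) a
    have hfθ' : Complex.normSq (q.eval (e θ)) * (2 - 2*Real.cos θ) ^ a = 0 := hfθ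
    have : Complex.normSq (q.eval (e θ)) = 0 := by
      by_contra hne
      have h5 := lt_of_le_of_ne (Complex.normSq_nonneg (q.eval (e θ))) (Ne.symm hne)
      nlinarith [h5, hwpos, hfθ']
    exact Complex.normSq_eq_zero.1 this
  by_contra hq
  have hinf : {z : ℂ | q.IsRoot z}.Infinite := by
    refine Set.Infinite.mono ?_ ((Set.Ioo_infinite (by positivity : (0:ℝ) < 2*Real.pi)).image e_injOn)
    intro z hz
    obtain ⟨θ, hθ, rfl⟩ := hz
    exact hroots θ hθ
  exact hq (Polynomial.eq_zero_of_infinite_isRoot q hinf)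



end OpucAux

open OpucAux

theorem opuc_second_order_ode
    (a : ℝ) (ha : 0 < a) (n : ℕ) (hn : 1 ≤ n)
    (φ : Polynomial ℂ)
    (hφ : IsMonicOPUC (fun θ => (2 - 2 * Real.cos θ) ^ a) n φ) :
    Polynomial.X * (Polynomial.X - 1) * Polynomial.derivative (Polynomial.derivative φ) +
      (Polynomial.C ((1 : ℂ) - (n : ℂ) - (a : ℂ)) * (Polynomial.X - 1) +
        Polynomial.C (2 * (a : ℂ) + 1) * Polynomial.X) * Polynomial.derivative φ -
      Polynomial.C ((n : ℂ) * ((a : ℂ) + 1)) * φ = 0 := by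
  obtain ⟨m, rfl⟩ : ∃ m, n = m + 1 := ⟨n - 1, by omega⟩
  obtain ⟨hmonic, hdeg_eq, horth⟩ := hφ
  have natφ : φ.natDegree = m + 1 := natDegree_eq_of_degree_eq_some hdeg_eq
  have hφn : φ.coeff (m+1) = 1 := by
    rw [← natφ]; exact hmonic.coeff_natDegree
  have hφc : ∀ j, m + 1 < j → φ.coeff j = 0 := fun j hj =>
    coeff_eq_zero_of_natDegree_lt (by omega)
  set φ₁ := derivative φ with hφ₁
  set φ₂ := derivative φ₁ with hφ₂
  have hφ1 : ∀ j, m + 1 ≤ j → φ₁.coeff j = 0 := by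
    intro j hj
    rw [hφ₁, coeff_derivative, hφc (j+1) (by omega), zero_mul]
  have hφ2 : ∀ j, m ≤ j → φ₂.coeff j = 0 := by
    intro j hj
    rw [hφ₂, coeff_derivative, hφ1 (j+1) (by omega), zero_mul]
  set q : Polynomial ℂ := X * (X - 1) * φ₂ +
      (C ((1 : ℂ) - ((m+1 : ℕ) : ℂ) - (a : ℂ)) * (X - 1) +
        C (2 * (a : ℂ) + 1) * X) * φ₁ -
      C (((m+1 : ℕ) : ℂ) * ((a : ℂ) + 1)) * φ with hq
  have hqe : q = X * (X * φ₂) - X * φ₂ +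
      (C ((1 : ℂ) - ((m+1 : ℕ) : ℂ) - (a : ℂ)) * (X * φ₁)
        - C ((1 : ℂ) - ((m+1 : ℕ) : ℂ) - (a : ℂ)) * φ₁
        + C (2 * (a : ℂ) + 1) * (X * φ₁)) -
      C (((m+1 : ℕ) : ℂ) * ((a : ℂ) + 1)) * φ := by
    rw [hq]; ring
  have hcn : q.coeff (m+1) = 0 := by
    rcases m with _ | t
    · rw [hqe]
      simp only [coeff_add, coeff_sub, coeff_C_mul, Polynomial.coeff_X_mul,
        Polynomial.mul_coeff_zero, Polynomial.coeff_X_zero, zero_mul]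
      rw [hφ2 0 (by omega), hφ1 1 (by omega), hφn,
        show φ₁.coeff 0 = φ.coeff 1 * (1 : ℂ) from by
          rw [hφ₁, coeff_derivative]; norm_num, hφn]
      push_cast
      ring
    · rw [hqe]
      simp only [coeff_add, coeff_sub, coeff_C_mul, show t + 1 + 1 = (t + 1) + 1 from rfl,
        Polynomial.coeff_X_mul]
      rw [hφ1 (t+2) (by omega),
        show φ₂.coeff t = φ.coeff (t+2) * ((t:ℂ)+1+1) * ((t:ℂ)+1) from by
          rw [hφ₂, coeff_derivative, hφ₁, coeff_derivative]; push_cast; ring,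
        show φ₂.coeff (t+1) = φ₁.coeff (t+2) * ((t:ℂ)+1+1) from by
          rw [hφ₂, coeff_derivative]; push_cast; ring,
        show φ₁.coeff (t+1) = φ.coeff (t+2) * ((t:ℂ)+1+1) from by
          rw [hφ₁, coeff_derivative]; push_cast; ring,
        hφ1 (t+2) (by omega), hφn]
      push_cast
      ring
  have hgt : ∀ j, m + 1 < j → q.coeff j = 0 := by
    intro j hj
    obtain ⟨t, rfl⟩ : ∃ t, j = t + 1 + 1 := ⟨j - 2, by omega⟩
    rw [hqe]
    simp only [coeff_add, coeff_sub, coeff_C_mul, Polynomial.coeff_X_mul]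
    rw [hφ2 t (by omega), hφ2 (t+1) (by omega), hφ1 (t+1) (by omega),
      hφ1 (t+1+1) (by omega), hφc (t+1+1) (by omega)]
    ring
  have hdeg : q.natDegree ≤ m + 1 := natDegree_le_iff_coeff_eq_zero.2 hgt
  have horth' : ∀ j < m + 1, Mint a φ j = 0 := fun j hj => horth j hj
  have hM : ∀ k ≤ m + 1, (starRingEnd ℂ) (q.coeff k) * Mint a q k = 0 := by
    intro k hk
    rcases eq_or_lt_of_le hk with h | h
    · rw [h, hcn]
      simp
    · rw [show Mint a q k = 0 from by
        rw [hq]; exact Mint_target ha (m+1) φ horth' h]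
      ring
  exact q_eq_zero ha q hdeg hM
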